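/- Let M ∈ ℝ^{p×m(n+1)} have full row rank p and let d = (d_n, …, d_1, d_0) ∈ ℝ^{n+1} with d_0 ≠ 0. Then the block matrix Z = [[M, 0_{p×m(L−1)}], [0_{m(L−1)×m}, T ⊗ I_m]] ∈ ℝ^{(p+m(L−1))×m(L+n)} has full row rank p + m(L−1). -/

import Mathlib

open Matrix Finset

/-- The Toeplitz matrix `T ∈ ℝ^{(L-1)×(L+n-1)}` with `T_{i,j} = d_{n-(j-i)}` for
`0 ≤ j - i ≤ n` and zero otherwise. -/
noncomputable def Tmat (d : ℕ → ℝ) (n L : ℕ) : Matrix (Fin (L - 1)) (Fin (L + n - 1)) ℝ :=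
  Matrix.of fun i j =>
    if (i : ℕ) ≤ (j : ℕ) ∧ (j : ℕ) ≤ (i : ℕ) + n then d (n - ((j : ℕ) - (i : ℕ))) else 0

/-- The block matrix `Z = [[M, 0], [0, T ⊗ I_m]]`, with `M` occupying the first `m(n+1)`
columns and `T ⊗ I_m` occupying the last `m(L+n-1)` columns. -/
noncomputable def Zgen {n m p : ℕ} (M : Matrix (Fin p) (Fin (n + 1) × Fin m) ℝ)
    (d : ℕ → ℝ) (L : ℕ) :
    Matrix (Fin p ⊕ (Fin (L - 1) × Fin m)) (Fin (L + n) × Fin m) ℝ :=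
  Matrix.of fun i jl =>
    match i with
    | Sum.inl i' =>
        if h : (jl.1 : ℕ) ≤ n then M i' (⟨(jl.1 : ℕ), by omega⟩, jl.2) else 0
    | Sum.inr il' =>
        if h : 1 ≤ (jl.1 : ℕ) then
          Tmat d n L il'.1 ⟨(jl.1 : ℕ) - 1, by have := jl.1.isLt; omega⟩ *
            (if il'.2 = jl.2 then 1 else 0)
        else 0

/-- if `M` has full row rank `p` and `d_0 ≠ 0`, then
`Z = [[M, 0], [0, T ⊗ I_m]]` has full row rank `p + m(L-1)`. -/
theorem stmt_17 {n m p L : ℕ} (hn : 0 < n) (hm : 0 < m) (hp : 0 < p) (hL : 0 < L)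
    (M : Matrix (Fin p) (Fin (n + 1) × Fin m) ℝ) (hM : M.rank = p)
    (d : ℕ → ℝ) (hd0 : d 0 ≠ 0) :
    (Zgen M d L).rank = p + m * (L - 1) := by
  classical
  have hli : LinearIndependent ℝ (Zgen M d L) := by
    refine Fintype.linearIndependent_iff.mpr ?_
    intro g hg
    have hcol : ∀ c : Fin (L + n) × Fin m, ∑ i, g i * Zgen M d L i c = 0 := by
      intro c
      have := congrFun hg c
      simpa [Finset.sum_apply] using this
    -- Step 1: the coefficients of the Toeplitz rows vanish, by downward induction.
    have hinr : ∀ i' : Fin (L - 1), ∀ l : Fin m, g (Sum.inr (i', l)) = 0 := by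
      have key : ∀ k, ∀ i' : Fin (L - 1), L - 2 - (i' : ℕ) = k → ∀ l : Fin m,
          g (Sum.inr (i', l)) = 0 := by
        intro k
        induction k using Nat.strong_induction_on with
        | _ k ih =>
          intro i' hk l
          have hi' := i'.isLt
          have hc := hcol (⟨(i' : ℕ) + n + 1, by omega⟩, l)
          rw [Fintype.sum_sum_type] at hc
          have h1 : ∑ a : Fin p, g (Sum.inl a) *
              Zgen M d L (Sum.inl a) (⟨(i' : ℕ) + n + 1, by omega⟩, l) = 0 := by
            apply Finset.sum_eq_zero
            intro a _
            have : ¬ (((⟨(i' : ℕ) + n + 1, by omega⟩ : Fin (L + n)) : ℕ) ≤ n) := by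
              simp
            simp [Zgen, this]
          rw [h1, zero_add] at hc
          rw [Fintype.sum_prod_type] at hc
          have h2 : ∀ i : Fin (L - 1), ∑ l'' : Fin m, g (Sum.inr (i, l'')) *
              Zgen M d L (Sum.inr (i, l'')) (⟨(i' : ℕ) + n + 1, by omega⟩, l) =
              (if i = i' then g (Sum.inr (i', l)) * d 0 else 0) := by
            intro i
            have hval : ∀ l'' : Fin m, g (Sum.inr (i, l'')) *
                Zgen M d L (Sum.inr (i, l'')) (⟨(i' : ℕ) + n + 1, by omega⟩, l) =
                (if l'' = l then g (Sum.inr (i, l'')) *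
                  Tmat d n L i ⟨(i' : ℕ) + n, by omega⟩ else 0) := by
              intro l''
              simp only [Zgen, Tmat, Matrix.of_apply]
              rw [dif_pos (by simp)]
              by_cases hll : l'' = l
              · simp only [hll, if_pos rfl, mul_one, Fin.isValue]
                have : ((i' : ℕ) + n + 1 - 1) = (i' : ℕ) + n := by omega
                simp [this]
              · simp [hll]
            rw [Finset.sum_congr rfl (fun l'' _ => hval l''), Finset.sum_ite_eq' _ l]
            simp only [Finset.mem_univ, if_true]
            by_cases hii : i = i'
            · subst hii
              rw [if_pos rfl]
              have : Tmat d n L i ⟨(i : ℕ) + n, by omega⟩ = d 0 := by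
                simp [Tmat]
              rw [this]
            · rw [if_neg hii]
              rcases lt_or_gt_of_ne (fun h => hii (Fin.ext h) : (i : ℕ) ≠ (i' : ℕ)) with hlt | hgt
              · -- i < i' : the Toeplitz entry is zero
                have : Tmat d n L i ⟨(i' : ℕ) + n, by omega⟩ = 0 := by
                  simp only [Tmat, Matrix.of_apply]
                  rw [if_neg]
                  simp
                  omega
                rw [this, mul_zero]
              · -- i > i' : the coefficient is zero by induction
                have hgz : g (Sum.inr (i, l)) = 0 := by
                  have hilt := i.isLt
                  exact ih (L - 2 - (i : ℕ)) (by omega) i rfl l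
                rw [hgz, zero_mul]
          rw [Finset.sum_congr rfl (fun i _ => h2 i), Finset.sum_ite_eq' _ i'] at hc
          simp only [Finset.mem_univ, if_true] at hc
          exact (mul_eq_zero.mp hc).resolve_right hd0
      intro i' l
      exact key (L - 2 - (i' : ℕ)) i' rfl l
    -- Step 2: the coefficients of the M rows vanish, since M has full row rank.
    have hM_li : LinearIndependent ℝ M := by
      refine linearIndependent_iff_card_eq_finrank_span.mpr ?_
      show Fintype.card (Fin p) = Set.finrank ℝ (Set.range M.row)
      rw [Set.finrank, ← Matrix.rank_eq_finrank_span_row, hM, Fintype.card_fin]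
    have hinl : ∀ a : Fin p, g (Sum.inl a) = 0 := by
      have hsum : ∑ a : Fin p, g (Sum.inl a) • M a = 0 := by
        funext jl
        obtain ⟨j, l⟩ := jl
        have hc := hcol (⟨(j : ℕ), by have := j.isLt; omega⟩, l)
        rw [Fintype.sum_sum_type] at hc
        have h2 : ∑ x : Fin (L - 1) × Fin m, g (Sum.inr x) *
            Zgen M d L (Sum.inr x) (⟨(j : ℕ), by have := j.isLt; omega⟩, l) = 0 := by
          apply Finset.sum_eq_zero
          intro x _
          rw [hinr x.1 x.2, zero_mul]
        rw [h2, add_zero] at hc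
        have h1 : ∀ a : Fin p, g (Sum.inl a) *
            Zgen M d L (Sum.inl a) (⟨(j : ℕ), by have := j.isLt; omega⟩, l) =
            g (Sum.inl a) * M a (j, l) := by
          intro a
          simp only [Zgen, Matrix.of_apply]
          rw [dif_pos (by exact j.is_le)]
        rw [Finset.sum_congr rfl (fun a _ => h1 a)] at hc
        simpa [Finset.sum_apply] using hc
      exact fun a => Fintype.linearIndependent_iff.mp hM_li (fun a => g (Sum.inl a)) hsum a
    intro i
    cases i with
    | inl a => exact hinl a
    | inr x => exact hinr x.1 x.2
  rw [LinearIndependent.rank_matrix (M := Zgen M d L) hli]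
  simp [Fintype.card_sum, Fintype.card_prod, mul_comm]
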